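/- Let (l_n) be the increasing enumeration of {m ∈ ℕ : b_m = 1}, where (b_n) is the Baum–Sweet sequence, and let (φ_n) be the infinite Fibonacci word. Then l_0 ≡ 0 (mod 2), l_1 ≡ 1 (mod 2), and l_n ≡ 1 - φ_{n-2} (mod 2) for n ≥ 2. -/

import Mathlib

/-- The Fibonacci morphism `0 ↦ 01`, `1 ↦ 0` (with `false = 0`, `true = 1`). -/
def phiFib (w : List Bool) : List Bool :=
  w.flatMap fun x => if x then [false] else [false, true]

/-- Prefixes of the infinite Fibonacci word: `F_0 = 0`, `F_{n+1} = φ(F_n)`. -/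
def fibPrefix : ℕ → List Bool
  | 0 => [false]
  | n + 1 => phiFib (fibPrefix n)

/-- The `n`-th letter `φ_n` of the infinite Fibonacci word, as `0` or `1` in `ℕ`. -/
def fibLetter (n : ℕ) : ℕ := ((fibPrefix (n + 1)).getD n false).toNat

namespace BSAux

def sig (y : ℕ) : List ℕ := if y % 2 = 1 then [2*y - 2, 2*y + 1] else [2*y + 1]

def blk : ℕ → List ℕ
  | 0 => [3]
  | k+1 => (blk k).flatMap sig

def tnum : ℕ → List ℕ
  | 0 => [3]
  | k+1 => tnum k ++ blk (k+1)

lemma tnum_succ (k : ℕ) : tnum (k+1) = 3 :: (tnum k).flatMap sig := by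
  induction k with
  | zero => rfl
  | succ k ih =>
    calc tnum (k+2) = tnum (k+1) ++ (blk (k+1)).flatMap sig := rfl
      _ = (3 :: (tnum k).flatMap sig) ++ (blk (k+1)).flatMap sig := by rw [ih]
      _ = 3 :: ((tnum k).flatMap sig ++ (blk (k+1)).flatMap sig) := rfl
      _ = 3 :: (tnum k ++ blk (k+1)).flatMap sig := by rw [List.flatMap_append]
      _ = 3 :: (tnum (k+1)).flatMap sig := rfl

def pz (m : ℕ) : Bool := decide (m % 2 = 0)

def g' (x : Bool) : List Bool := if x then [false] else [true, false]

lemma map_pz_flatMap_sig (w : List ℕ) :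
    (w.flatMap sig).map pz = (w.map pz).flatMap g' := by
  induction w with
  | nil => rfl
  | cons a w ih =>
    simp only [List.flatMap_cons, List.map_append, List.map_cons, ih]
    congr 1
    rcases Nat.mod_two_eq_zero_or_one a with h | h
    · simp [sig, g', pz, h, Nat.add_mod, Nat.mul_mod]
    · obtain ⟨j, rfl⟩ : ∃ j, a = 2*j+1 := ⟨a/2, by omega⟩
      have e1 : 2*(2*j+1) - 2 = 4*j := by omega
      simp [sig, g', pz, h, e1, Nat.add_mod, Nat.mul_mod]

lemma conj (w : List Bool) : phiFib w ++ [false] = false :: w.flatMap g' := by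
  induction w with
  | nil => rfl
  | cons a w ih =>
    show (if a then [false] else [false,true]) ++ phiFib w ++ [false] = _
    cases a <;> simp_all [g', phiFib]

lemma parity_prefix (k : ℕ) : ∃ r, fibPrefix (k+2) = (tnum k).map pz ++ r ∧
    (r = [true,false] ∨ r = [false,true]) := by
  induction k with
  | zero => exact ⟨[true,false], by decide, Or.inl rfl⟩
  | succ k ih =>
    obtain ⟨r, hr, hc⟩ := ih
    have hstep : fibPrefix (k+3) = phiFib ((tnum k).map pz) ++ phiFib r := by
      rw [show fibPrefix (k+3) = phiFib (fibPrefix (k+2)) from rfl, hr]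
      exact List.flatMap_append ..
    have hmap : (tnum (k+1)).map pz = phiFib ((tnum k).map pz) ++ [false] := by
      rw [tnum_succ, List.map_cons, map_pz_flatMap_sig, conj]
      rfl
    rcases hc with rfl | rfl
    · exact ⟨[false,true], by rw [hstep, hmap]; simp [phiFib], Or.inr rfl⟩
    · exact ⟨[true,false], by rw [hstep, hmap]; simp [phiFib], Or.inl rfl⟩

lemma mem_sig_bounds {y m : ℕ} (hm : m ∈ sig y) : m ≤ 2*y+1 ∧ 2*y - 2 ≤ m := by
  unfold sig at hm
  split at hm <;> simp at hm <;> omega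

lemma blk_bounds (k : ℕ) : ∀ m ∈ blk k, 2 * 2^k ≤ m ∧ m < 4 * 2^k := by
  induction k with
  | zero => intro m hm; simp [blk] at hm; omega
  | succ k ih =>
    intro m hm
    rw [show blk (k+1) = (blk k).flatMap sig from rfl, List.mem_flatMap] at hm
    obtain ⟨y, hy, hm⟩ := hm
    obtain ⟨hy1, hy2⟩ := ih y hy
    have hp : (0:ℕ) < 2^k := Nat.two_pow_pos _
    unfold sig at hm
    rw [pow_succ]
    split at hm <;> simp at hm <;> omega

lemma blk_ne (k : ℕ) : blk k ≠ [] := by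
  induction k with
  | zero => simp [blk]
  | succ k ih =>
    rw [show blk (k+1) = (blk k).flatMap sig from rfl]
    rcases List.exists_mem_of_ne_nil _ ih with ⟨y, hy⟩
    have : (2*y+1) ∈ (blk k).flatMap sig := by
      rw [List.mem_flatMap]
      exact ⟨y, hy, by unfold sig; split <;> simp⟩
    exact List.ne_nil_of_mem this

lemma blk_gap (k : ℕ) : (blk k).Pairwise (fun a c => a + 3 ≤ c) := by
  induction k with
  | zero => simp [blk]
  | succ k ih =>
    rw [show blk (k+1) = (blk k).flatMap sig from rfl, List.flatMap, List.pairwise_flatten]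
    refine ⟨?_, ?_⟩
    · intro l hl
      rw [List.mem_map] at hl
      obtain ⟨y, _, rfl⟩ := hl
      unfold sig
      split <;> simp <;> omega
    · rw [List.pairwise_map]
      refine ih.imp_of_mem ?_
      intro a c ha hc hac x hx z hz
      obtain ⟨hx1, _⟩ := mem_sig_bounds hx
      obtain ⟨_, hz2⟩ := mem_sig_bounds hz
      omega

lemma blk_one (k : ℕ) (b : ℕ → ℕ) (h0 : b 0 = 1)
    (h1 : ∀ n, b (2 * n + 1) = b n) (h2 : ∀ n, b (4 * n) = b n) :
    ∀ m ∈ blk k, b m = 1 := by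
  induction k with
  | zero =>
    intro m hm; simp [blk] at hm; subst hm
    rw [show (3:ℕ) = 2*1+1 from rfl, h1, show (1:ℕ) = 2*0+1 from rfl, h1, h0]
  | succ k ih =>
    intro m hm
    rw [show blk (k+1) = (blk k).flatMap sig from rfl, List.mem_flatMap] at hm
    obtain ⟨y, hy, hm⟩ := hm
    have hby : b y = 1 := ih y hy
    unfold sig at hm
    split at hm
    · rename_i hodd
      obtain ⟨j, rfl⟩ : ∃ j, y = 2*j+1 := ⟨y/2, by omega⟩
      simp only [List.mem_cons, List.mem_singleton] at hm
      rcases hm with rfl | hm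
      · rw [show 2*(2*j+1) - 2 = 4*j from by omega, h2]
        rw [h1] at hby; exact hby
      · simp at hm; subst hm; rw [h1]; exact hby
    · simp at hm; subst hm; rw [h1]; exact hby

lemma blk_complete (b : ℕ → ℕ)
    (h1 : ∀ n, b (2 * n + 1) = b n) (h2 : ∀ n, b (4 * n) = b n)
    (h3 : ∀ n, b (4 * n + 2) = 0) :
    ∀ k m, b m = 1 → 2 * 2^k ≤ m → m < 4 * 2^k → m ∈ blk k := by
  intro k
  induction k using Nat.strong_induction_on with
  | _ k IH =>
    match k with
    | 0 =>
      intro m hb hlo hhi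
      interval_cases m
      · exact absurd hb (by rw [show (2:ℕ) = 4*0+2 from rfl, h3]; omega)
      · simp [blk]
    | 1 =>
      intro m hb hlo hhi
      have hblk : blk 1 = [4, 7] := by norm_num [blk, sig]
      rw [hblk]
      simp only [pow_one] at hlo hhi
      interval_cases m
      · simp
      · exfalso
        rw [show (5:ℕ) = 2*2+1 from rfl, h1, show (2:ℕ) = 4*0+2 from rfl, h3] at hb
        omega
      · exfalso; rw [show (6:ℕ) = 4*1+2 from rfl, h3] at hb; omega
      · simp
    | (k+2) =>
      intro m hb hlo hhi
      have hp : (0:ℕ) < 2^k := Nat.two_pow_pos _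
      rw [show blk (k+2) = (blk (k+1)).flatMap sig from rfl, List.mem_flatMap]
      rcases Nat.mod_two_eq_zero_or_one m with he | ho
      · rcases (by omega : m % 4 = 0 ∨ m % 4 = 2) with h4 | h4
        · obtain ⟨j, rfl⟩ : ∃ j, m = 4*j := ⟨m/4, by omega⟩
          have hb2j : b (2*j+1) = 1 := by rw [h1, ← h2 j]; exact hb
          have hmem : (2*j+1) ∈ blk (k+1) := by
            refine IH (k+1) (by omega) _ hb2j ?_ ?_ <;>
              (simp only [pow_succ] at hlo hhi ⊢; omega)
          refine ⟨2*j+1, hmem, ?_⟩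
          unfold sig
          rw [if_pos (by omega)]
          simp only [List.mem_cons, List.mem_singleton]
          omega
        · exfalso
          obtain ⟨j, rfl⟩ : ∃ j, m = 4*j+2 := ⟨m/4, by omega⟩
          rw [h3] at hb; omega
      · obtain ⟨j, rfl⟩ : ∃ j, m = 2*j+1 := ⟨m/2, by omega⟩
        have hbj : b j = 1 := by rw [← h1 j]; exact hb
        have hmem : j ∈ blk (k+1) := by
          refine IH (k+1) (by omega) _ hbj ?_ ?_ <;>
            (simp only [pow_succ] at hlo hhi ⊢; omega)
        exact ⟨j, hmem, by unfold sig; split <;> simp⟩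

lemma tnum_bounds (k : ℕ) : ∀ m ∈ tnum k, 3 ≤ m ∧ m < 4 * 2^k := by
  induction k with
  | zero => intro m hm; simp [tnum] at hm; omega
  | succ k ih =>
    intro m hm
    rw [show tnum (k+1) = tnum k ++ blk (k+1) from rfl, List.mem_append] at hm
    have hp : (0:ℕ) < 2^k := Nat.two_pow_pos _
    rcases hm with hm | hm
    · have := ih m hm; simp only [pow_succ]; omega
    · have := blk_bounds (k+1) m hm
      simp only [pow_succ] at this ⊢
      omega

lemma tnum_sorted (k : ℕ) : (tnum k).Pairwise (· < ·) := by
  induction k with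
  | zero => simp [tnum]
  | succ k ih =>
    rw [show tnum (k+1) = tnum k ++ blk (k+1) from rfl, List.pairwise_append]
    refine ⟨ih, (blk_gap (k+1)).imp (by omega), ?_⟩
    intro a ha c hc
    have h1 := (tnum_bounds k a ha).2
    have h2 := (blk_bounds (k+1) c hc).1
    simp only [pow_succ] at h2
    omega

lemma blk_subset_tnum {i k : ℕ} (h : i ≤ k) : ∀ m ∈ blk i, m ∈ tnum k := by
  induction k with
  | zero =>
    intro m hm
    rw [Nat.le_zero] at h; subst h
    simpa [tnum, blk] using hm
  | succ k ih =>
    intro m hm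
    rw [show tnum (k+1) = tnum k ++ blk (k+1) from rfl, List.mem_append]
    rcases Nat.lt_or_ge i (k+1) with h' | h'
    · exact Or.inl (ih (by omega) m hm)
    · have : i = k+1 := by omega
      subst this
      exact Or.inr hm

lemma tnum_complete (k : ℕ) (b : ℕ → ℕ)
    (h1 : ∀ n, b (2 * n + 1) = b n) (h2 : ∀ n, b (4 * n) = b n)
    (h3 : ∀ n, b (4 * n + 2) = 0) :
    ∀ m, b m = 1 → 2 ≤ m → m < 4 * 2^k → m ∈ tnum k := by
  intro m hb hlo hhi
  have hm2 : m ≠ 2 := by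
    intro h; subst h
    rw [show (2:ℕ) = 4*0+2 from rfl, h3] at hb; omega
  have hm3 : 3 ≤ m := by omega
  -- find i with 2*2^i ≤ m < 4*2^i and i ≤ k
  have : ∃ i, i ≤ k ∧ 2 * 2^i ≤ m ∧ m < 4 * 2^i := by
    clear hb hm2 h1 h2 h3
    induction k with
    | zero => exact ⟨0, le_refl _, by omega, hhi⟩
    | succ k ih =>
      rcases Nat.lt_or_ge m (4 * 2^k) with h' | h'
      · obtain ⟨i, hik, hi1, hi2⟩ := ih h'
        exact ⟨i, by omega, hi1, hi2⟩
      · refine ⟨k+1, le_refl _, ?_, ?_⟩ <;> simp only [pow_succ] <;> omega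
  obtain ⟨i, hik, hi1, hi2⟩ := this
  exact blk_subset_tnum hik m (blk_complete b h1 h2 h3 i m hb hi1 hi2)

lemma tnum_length (k : ℕ) : k + 1 ≤ (tnum k).length := by
  induction k with
  | zero => simp [tnum]
  | succ k ih =>
    rw [show tnum (k+1) = tnum k ++ blk (k+1) from rfl, List.length_append]
    have : 1 ≤ (blk (k+1)).length := List.length_pos_iff.mpr (blk_ne (k+1))
    omega


lemma tnum_one (k : ℕ) (b : ℕ → ℕ) (h0 : b 0 = 1)
    (h1 : ∀ n, b (2 * n + 1) = b n) (h2 : ∀ n, b (4 * n) = b n) :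
    ∀ m ∈ tnum k, b m = 1 := by
  induction k with
  | zero =>
    intro m hm; simp [tnum] at hm; subst hm
    rw [show (3:ℕ) = 2*1+1 from rfl, h1, show (1:ℕ) = 2*0+1 from rfl, h1, h0]
  | succ k ih =>
    intro m hm
    rw [show tnum (k+1) = tnum k ++ blk (k+1) from rfl, List.mem_append] at hm
    rcases hm with hm | hm
    · exact ih m hm
    · exact blk_one (k+1) b h0 h1 h2 m hm

lemma phiFib_append (u v : List Bool) : phiFib (u ++ v) = phiFib u ++ phiFib v :=
  List.flatMap_append ..

lemma length_le_phiFib (w : List Bool) : w.length ≤ (phiFib w).length := by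
  induction w with
  | nil => simp [phiFib]
  | cons a w ih =>
    rw [show phiFib (a :: w) = (if a then [false] else [false,true]) ++ phiFib w from rfl]
    rw [List.length_append, List.length_cons]
    cases a <;> simp <;> omega

lemma fibPrefix_prefix_succ (k : ℕ) : fibPrefix k <+: fibPrefix (k+1) := by
  induction k with
  | zero => exact ⟨[true], rfl⟩
  | succ k ih =>
    obtain ⟨t, ht⟩ := ih
    refine ⟨phiFib t, ?_⟩
    have h2 : phiFib (fibPrefix k ++ t) = fibPrefix (k + 2) := by rw [ht]; rfl
    rw [← h2, phiFib_append]
    rfl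

lemma fibPrefix_prefix {i j : ℕ} (h : i ≤ j) : fibPrefix i <+: fibPrefix j := by
  induction j with
  | zero =>
    rw [Nat.le_zero] at h; subst h
    exact List.prefix_refl _
  | succ j ih =>
    rcases Nat.lt_or_ge i (j+1) with h' | h'
    · exact (ih (by omega)).trans (fibPrefix_prefix_succ j)
    · have : i = j+1 := by omega
      subst this
      exact List.prefix_refl _

lemma fibPrefix_length (k : ℕ) : k + 1 ≤ (fibPrefix k).length := by
  induction k with
  | zero => simp [fibPrefix]
  | succ k ih =>
    obtain ⟨t, ht⟩ := fibPrefix_prefix (Nat.zero_le k)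
    have hlen : (fibPrefix k).length = 1 + t.length := by
      rw [← ht]; simp [fibPrefix]; omega
    have h2 : fibPrefix (k+1) = [false, true] ++ phiFib t := by
      rw [show fibPrefix (k+1) = phiFib (fibPrefix k) from rfl, ← ht, phiFib_append]
      rfl
    have h3 := length_le_phiFib t
    rw [h2, List.length_append]
    simp only [List.length_cons, List.length_singleton, List.length_nil]
    omega

lemma getD_of_prefix {L1 L2 : List Bool} (h : L1 <+: L2) {i : ℕ} (hi : i < L1.length) :
    L2.getD i false = L1.getD i false := by
  obtain ⟨t, rfl⟩ := h
  rw [List.getD_eq_getElem _ _ hi,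
    List.getD_eq_getElem _ _ (by rw [List.length_append]; omega),
    List.getElem_append_left]

lemma enum_eq (b : ℕ → ℕ) (l : ℕ → ℕ) (hmono : StrictMono l)
    (hrange : ∀ m : ℕ, b m = 1 ↔ m ∈ Set.range l)
    (L : List ℕ) (B : ℕ) (hsort : L.Pairwise (· < ·))
    (hmem : ∀ m ∈ L, b m = 1) (hcomp : ∀ m, b m = 1 → m < B → m ∈ L)
    (hbd : ∀ m ∈ L, m < B) :
    ∀ i (h : i < L.length), l i = L.get ⟨i, h⟩ := by
  have hsm : StrictMono L.get := List.Pairwise.sortedLT hsort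
  intro i
  induction i using Nat.strong_induction_on with
  | _ i IH =>
    intro h
    obtain ⟨j, hj⟩ := (hrange _).1 (hmem _ (List.get_mem L ⟨i, h⟩))
    have hij : i ≤ j := by
      by_contra hc
      push_neg at hc
      have h2 := IH j hc (by omega)
      have h3 : L.get ⟨j, by omega⟩ < L.get ⟨i, h⟩ := hsm (Fin.mk_lt_mk.mpr hc)
      rw [← h2, hj] at h3
      exact lt_irrefl _ h3
    have hle : l i ≤ L.get ⟨i, h⟩ := by rw [← hj]; exact hmono.monotone hij
    have hli : l i ∈ L :=
      hcomp _ ((hrange _).2 ⟨i, rfl⟩) (lt_of_le_of_lt hle (hbd _ (List.get_mem L ⟨i, h⟩)))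
    obtain ⟨⟨i', hi'⟩, hgi⟩ := List.mem_iff_get.mp hli
    have hii : i ≤ i' := by
      by_contra hc
      push_neg at hc
      have h2 := IH i' hc hi'
      rw [hgi] at h2
      exact absurd (hmono.injective h2.symm) (by omega)
    have h4 : L.get ⟨i, h⟩ ≤ L.get ⟨i', hi'⟩ := hsm.monotone (Fin.mk_le_mk.mpr hii)
    rw [hgi] at h4
    omega

end BSAux

/-- If `(l n)` is the increasing enumeration of `{m : b m = 1}` for the Baum–Sweet
sequence `b`, then `l 0 ≡ 0`, `l 1 ≡ 1`, and `l n ≡ 1 - φ_{n-2} (mod 2)` for `n ≥ 2`. -/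
theorem baumSweet_ones_enumeration_mod_two
    (b : ℕ → ℕ) (h0 : b 0 = 1)
    (h1 : ∀ n, b (2 * n + 1) = b n)
    (h2 : ∀ n, b (4 * n) = b n)
    (h3 : ∀ n, b (4 * n + 2) = 0)
    (l : ℕ → ℕ) (hmono : StrictMono l)
    (hrange : ∀ m : ℕ, b m = 1 ↔ m ∈ Set.range l) :
    l 0 % 2 = 0 ∧ l 1 % 2 = 1 ∧ ∀ n ≥ 2, l n % 2 = 1 - fibLetter (n - 2) := by
  have hpow : ∀ k : ℕ, 1 ≤ 2^k := fun k => Nat.one_le_two_pow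
  have hfull_sorted : ∀ k, (0 :: 1 :: BSAux.tnum k).Pairwise (· < ·) := by
    intro k
    rw [List.pairwise_cons, List.pairwise_cons]
    refine ⟨?_, ?_, BSAux.tnum_sorted k⟩
    · intro a ha
      rcases List.mem_cons.mp ha with rfl | ha
      · omega
      · have := (BSAux.tnum_bounds k a ha).1; omega
    · intro a ha
      have := (BSAux.tnum_bounds k a ha).1; omega
  have hfull_mem : ∀ k, ∀ m ∈ (0 :: 1 :: BSAux.tnum k), b m = 1 := by
    intro k m hm
    rcases List.mem_cons.mp hm with rfl | hm
    · exact h0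
    rcases List.mem_cons.mp hm with rfl | hm
    · rw [show (1:ℕ) = 2*0+1 from rfl, h1]; exact h0
    · exact BSAux.tnum_one k b h0 h1 h2 m hm
  have hfull_comp : ∀ k, ∀ m, b m = 1 → m < 4 * 2^k → m ∈ (0 :: 1 :: BSAux.tnum k) := by
    intro k m hb hlt
    match m with
    | 0 => exact List.mem_cons_self
    | 1 => exact List.mem_cons_of_mem _ (List.mem_cons_self)
    | (m+2) =>
      exact List.mem_cons_of_mem _ (List.mem_cons_of_mem _
        (BSAux.tnum_complete k b h1 h2 h3 _ hb (by omega) hlt))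
  have hfull_bd : ∀ k, ∀ m ∈ (0 :: 1 :: BSAux.tnum k), m < 4 * 2^k := by
    intro k m hm
    have := hpow k
    rcases List.mem_cons.mp hm with rfl | hm
    · omega
    rcases List.mem_cons.mp hm with rfl | hm
    · omega
    · exact (BSAux.tnum_bounds k m hm).2
  have henum : ∀ k i (h : i < (0 :: 1 :: BSAux.tnum k).length),
      l i = (0 :: 1 :: BSAux.tnum k).get ⟨i, h⟩ := fun k =>
    BSAux.enum_eq b l hmono hrange _ (4 * 2^k) (hfull_sorted k) (hfull_mem k)
      (hfull_comp k) (hfull_bd k)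
  have hlen0 : (0 : ℕ) < (0 :: 1 :: BSAux.tnum 0).length := by simp
  have l0 : l 0 = 0 := henum 0 0 hlen0
  have l1 : l 1 = 1 := henum 0 1 (by simp)
  refine ⟨by omega, by omega, ?_⟩
  intro n hn
  obtain ⟨i, rfl⟩ : ∃ i, n = i + 2 := ⟨n - 2, by omega⟩
  have hti : i < (BSAux.tnum (i+2)).length := by
    have := BSAux.tnum_length (i+2); omega
  have hl : l (i+2) = (BSAux.tnum (i+2)).get ⟨i, hti⟩ := by
    have h := henum (i+2) (i+2) (by simp only [List.length_cons]; omega)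
    rw [h]
    rfl
  obtain ⟨r, hr, _⟩ := BSAux.parity_prefix (i+2)
  have e1 : (fibPrefix (i+1)).getD i false = (fibPrefix (i+4)).getD i false :=
    (BSAux.getD_of_prefix (BSAux.fibPrefix_prefix (by omega))
      (by have := BSAux.fibPrefix_length (i+1); omega)).symm
  have e2 : (fibPrefix (i+4)).getD i false
      = ((BSAux.tnum (i+2)).map BSAux.pz).getD i false := by
    refine BSAux.getD_of_prefix ⟨r, ?_⟩ (by rw [List.length_map]; omega)
    rw [← hr]
  have e3 : ((BSAux.tnum (i+2)).map BSAux.pz).getD i false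
      = BSAux.pz ((BSAux.tnum (i+2)).get ⟨i, hti⟩) := by
    rw [List.getD_eq_getElem _ _ (by rw [List.length_map]; omega)]
    simp [List.getElem_map]
  have hfl : fibLetter i = (BSAux.pz (l (i+2))).toNat := by
    unfold fibLetter
    rw [e1, e2, e3, ← hl]
  rw [show i + 2 - 2 = i from rfl, hfl]
  rcases Nat.mod_two_eq_zero_or_one (l (i+2)) with h | h <;>
    simp [BSAux.pz, h]
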